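/- Let A be a complex Banach algebra possessing a contractive approximate identity. Every A-universal Hilbert A-module is a generator for the category of Hilbert A-modules. -/

import Mathlib

noncomputable section

open Filter

open scoped ENNReal

/-- A contractive approximate identity for a (possibly non-unital) normed algebra `A`:
a net `(e i)`, indexed by a nontrivial filter, with `‖e i‖ ≤ 1` for all `i`, such that
`e i * a → a` and `a * e i → a` in norm for every `a ∈ A`. -/
def HasCAI (A : Type) [NonUnitalNormedRing A] : Prop :=
  ∃ (ι : Type) (l : Filter ι) (e : ι → A), l.NeBot ∧ (∀ i, ‖e i‖ ≤ 1) ∧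
    ∀ a : A, Tendsto (fun i => e i * a) l (nhds a) ∧ Tendsto (fun i => a * e i) l (nhds a)

variable (A : Type) [NonUnitalNormedRing A] [NormedSpace ℂ A] [IsScalarTower ℂ A A]
  [SMulCommClass ℂ A A]

/-- A Hilbert `A`-module structure on the Hilbert space `K`: a contractive algebra
homomorphism `π : A → B(K)` which is nondegenerate, i.e. the linear span of
`{π a x : a ∈ A, x ∈ K}` is dense in `K`. -/
def IsHilbertRep {K : Type} [NormedAddCommGroup K] [InnerProductSpace ℂ K] [CompleteSpace K]
    (π : A →ₙₐ[ℂ] (K →L[ℂ] K)) : Prop :=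
  (∀ a : A, ‖π a‖ ≤ ‖a‖) ∧
  Dense ((Submodule.span ℂ {x : K | ∃ (a : A) (y : K), π a y = x} : Submodule ℂ K) : Set K)

/-- A bounded `A`-module map between Hilbert `A`-modules. -/
def IsModuleMap {K L : Type} [NormedAddCommGroup K] [InnerProductSpace ℂ K]
    [NormedAddCommGroup L] [InnerProductSpace ℂ L]
    (πK : A →ₙₐ[ℂ] (K →L[ℂ] K)) (πL : A →ₙₐ[ℂ] (L →L[ℂ] L)) (T : K →L[ℂ] L) : Prop :=
  ∀ (a : A) (x : K), T (πK a x) = πL a (T x)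

/-- `H` is a generator for the category of Hilbert `A`-modules: for all Hilbert
`A`-modules `K`, `L` and every nonzero bounded `A`-module map `R : K → L` there is a
bounded `A`-module map `V : H → K` with `R ∘ V ≠ 0`. -/
def IsGenerator {H : Type} [NormedAddCommGroup H] [InnerProductSpace ℂ H] [CompleteSpace H]
    (πH : A →ₙₐ[ℂ] (H →L[ℂ] H)) : Prop :=
  ∀ (K L : Type) [NormedAddCommGroup K] [InnerProductSpace ℂ K] [CompleteSpace K]
    [NormedAddCommGroup L] [InnerProductSpace ℂ L] [CompleteSpace L],
    ∀ (πK : A →ₙₐ[ℂ] (K →L[ℂ] K)) (πL : A →ₙₐ[ℂ] (L →L[ℂ] L)),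
      IsHilbertRep A πK → IsHilbertRep A πL →
      ∀ R : K →L[ℂ] L, IsModuleMap A πK πL R → R ≠ 0 →
        ∃ V : H →L[ℂ] K, IsModuleMap A πH πK V ∧ R.comp V ≠ 0

theorem diag_memℓp {H : Type} [NormedAddCommGroup H] [InnerProductSpace ℂ H] {ι : Type}
    (T : H →L[ℂ] H) (f : lp (fun _ : ι => H) 2) : Memℓp (fun i => T (f i)) 2 := by
  apply memℓp_gen
  have hf : Summable fun i => ‖f i‖ ^ (2 : ℝ≥0∞).toReal :=
    (lp.memℓp f).summable (by norm_num)
  refine Summable.of_nonneg_of_le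
    (fun i => Real.rpow_nonneg (norm_nonneg _) _) (fun i => ?_)
    (hf.mul_left (‖T‖ ^ (2 : ℝ≥0∞).toReal))
  calc ‖T (f i)‖ ^ (2 : ℝ≥0∞).toReal ≤ (‖T‖ * ‖f i‖) ^ (2 : ℝ≥0∞).toReal :=
        Real.rpow_le_rpow (norm_nonneg _) (T.le_opNorm _) (by norm_num)
    _ = _ := Real.mul_rpow (norm_nonneg _) (norm_nonneg _)

/-- The diagonal amplification of an operator on `H` to the `ℓ²`-direct sum of `ι`
copies of `H`. -/
def lpDiag {H : Type} [NormedAddCommGroup H] [InnerProductSpace ℂ H] (ι : Type)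
    (T : H →L[ℂ] H) : lp (fun _ : ι => H) 2 →L[ℂ] lp (fun _ : ι => H) 2 := by
  refine LinearMap.mkContinuous
    { toFun := fun f => ⟨fun i => T (f i), diag_memℓp T f⟩
      map_add' := ?_
      map_smul' := ?_ } ‖T‖ ?_
  · intro f g; ext i; simp <;> rfl
  · intro c f; ext i; simp
  · intro f
    apply lp.norm_le_of_tsum_le (by norm_num) (mul_nonneg (norm_nonneg T) (norm_nonneg f))
    have hsum : Summable fun i => ‖T (f i)‖ ^ (2 : ℝ≥0∞).toReal :=
      (diag_memℓp T f).summable (by norm_num)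
    have hf : Summable fun i => ‖f i‖ ^ (2 : ℝ≥0∞).toReal :=
      (lp.memℓp f).summable (by norm_num)
    have h1 : ∀ i, ‖T (f i)‖ ^ (2 : ℝ≥0∞).toReal ≤
        ‖T‖ ^ (2 : ℝ≥0∞).toReal * ‖f i‖ ^ (2 : ℝ≥0∞).toReal := fun i =>
      calc ‖T (f i)‖ ^ (2 : ℝ≥0∞).toReal ≤ (‖T‖ * ‖f i‖) ^ (2 : ℝ≥0∞).toReal :=
            Real.rpow_le_rpow (norm_nonneg _) (T.le_opNorm _) (by norm_num)
        _ = _ := Real.mul_rpow (norm_nonneg _) (norm_nonneg _)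
    calc (∑' i, ‖T (f i)‖ ^ (2 : ℝ≥0∞).toReal)
        ≤ ∑' i, ‖T‖ ^ (2 : ℝ≥0∞).toReal * ‖f i‖ ^ (2 : ℝ≥0∞).toReal :=
          Summable.tsum_le_tsum h1 hsum (hf.mul_left _)
      _ = ‖T‖ ^ (2 : ℝ≥0∞).toReal * ∑' i, ‖f i‖ ^ (2 : ℝ≥0∞).toReal := tsum_mul_left
      _ = ‖T‖ ^ (2 : ℝ≥0∞).toReal * ‖f‖ ^ (2 : ℝ≥0∞).toReal := by
          rw [lp.norm_rpow_eq_tsum (by norm_num) f]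
      _ = (‖T‖ * ‖f‖) ^ (2 : ℝ≥0∞).toReal :=
          (Real.mul_rpow (norm_nonneg _) (norm_nonneg _)).symm

/-- The multiple `H^(ι)` of a representation: the `ℓ²`-direct sum of `ι` copies of `H`,
with the coordinatewise action of `A`. -/
def multipleRep {H : Type} [NormedAddCommGroup H] [InnerProductSpace ℂ H]
    (πH : A →ₙₐ[ℂ] (H →L[ℂ] H)) (ι : Type) :
    A →ₙₐ[ℂ] (lp (fun _ : ι => H) 2 →L[ℂ] lp (fun _ : ι => H) 2) where
  toFun a := lpDiag ι (πH a)
  map_add' a b := by ext f i; simp [lpDiag] <;> rfl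
  map_smul' c a := by ext f i; simp [lpDiag]
  map_zero' := by ext f i; simp [lpDiag]
  map_mul' a b := by ext f i; simp [lpDiag, ContinuousLinearMap.mul_apply]

/-- `H` is an `A`-universal Hilbert `A`-module: every Hilbert `A`-module `K` is spatially
equivalent to an `A`-complemented closed `A`-invariant subspace of some multiple `H^(ι)`;
here this is expressed by an isometric `A`-intertwiner `U : K → H^(ι)` together with a
continuous idempotent `A`-module map `P` of `H^(ι)` onto the range of `U`. -/
def IsUniversal {H : Type} [NormedAddCommGroup H] [InnerProductSpace ℂ H] [CompleteSpace H]
    (πH : A →ₙₐ[ℂ] (H →L[ℂ] H)) : Prop :=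
  ∀ (K : Type) [NormedAddCommGroup K] [InnerProductSpace ℂ K] [CompleteSpace K],
    ∀ (πK : A →ₙₐ[ℂ] (K →L[ℂ] K)), IsHilbertRep A πK →
      ∃ (ι : Type) (U : K →ₗᵢ[ℂ] lp (fun _ : ι => H) 2)
        (P : lp (fun _ : ι => H) 2 →L[ℂ] lp (fun _ : ι => H) 2),
        (∀ (a : A) (x : K), U (πK a x) = multipleRep A πH ι a (U x)) ∧
        IsModuleMap A (multipleRep A πH ι) (multipleRep A πH ι) P ∧
        P.comp P = P ∧ Set.range ⇑P = Set.range ⇑U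


theorem lpDiag_apply {H : Type} [NormedAddCommGroup H] [InnerProductSpace ℂ H] (ι : Type)
    (T : H →L[ℂ] H) (f : lp (fun _ : ι => H) 2) (i : ι) : lpDiag ι T f i = T (f i) := rfl

/-- Every `A`-universal Hilbert `A`-module is a generator for the category of Hilbert
`A`-modules. -/
theorem universal_is_generator [CompleteSpace A] (hA : HasCAI A)
    (H : Type) [NormedAddCommGroup H] [InnerProductSpace ℂ H] [CompleteSpace H]
    (πH : A →ₙₐ[ℂ] (H →L[ℂ] H)) (hrep : IsHilbertRep A πH) (huniv : IsUniversal A πH) :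
    IsGenerator A πH := by
  intro K L _ _ _ _ _ _ πK πL hK hL R hR hRne
  obtain ⟨ι, U, P, hU, hP, hPP, hrange⟩ := huniv K πK hK
  classical
  set M := lp (fun _ : ι => H) 2 with hM
  have hmem : ∀ m : M, ∃ k : K, U k = P m := by
    intro m
    have : P m ∈ Set.range ⇑U := hrange ▸ Set.mem_range_self m
    exact this
  choose q hq using hmem
  have hUinj : Function.Injective ⇑U := U.injective
  -- `q` is linear
  have hqadd : ∀ m n : M, q (m + n) = q m + q n := by
    intro m n
    apply hUinj
    rw [hq, U.map_add, hq, hq, map_add]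
  have hqsmul : ∀ (c : ℂ) (m : M), q (c • m) = c • q m := by
    intro c m
    apply hUinj
    rw [hq, U.map_smul, hq, map_smul]
  have hqnorm : ∀ m : M, ‖q m‖ ≤ ‖P‖ * ‖m‖ := by
    intro m
    rw [← U.norm_map (q m), hq]
    exact P.le_opNorm m
  set Q : M →L[ℂ] K := LinearMap.mkContinuous
    { toFun := q, map_add' := hqadd, map_smul' := hqsmul } ‖P‖ hqnorm with hQdef
  have hQ : ∀ m : M, U (Q m) = P m := hq
  -- `Q` is a module map
  have hQmod : ∀ (a : A) (m : M), Q (multipleRep A πH ι a m) = πK a (Q m) := by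
    intro a m
    apply hUinj
    rw [hQ, hP a m, ← hQ, hU]
  -- the coordinate inclusions
  have hsingle_norm : ∀ (j : ι) (h : H), ‖(lp.single 2 j h : M)‖ = ‖h‖ := by
    intro j h
    simpa using lp.norm_single (p := 2) (E := fun _ : ι => H) (by norm_num)
      (fun _ => h) j
  set S : ι → (H →L[ℂ] M) := fun j => LinearMap.mkContinuous
    { toFun := fun h => (lp.single 2 j h : M)
      map_add' := by
        intro h h'
        ext i
        by_cases hij : i = j
        · subst hij; simp [lp.single_apply_self]
        · simp [lp.single_apply_ne 2 j _ hij]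
      map_smul' := by
        intro c h
        simp [lp.single_smul] } 1 (by
        intro h
        simp [hsingle_norm j h]) with hSdef
  have hS : ∀ (j : ι) (h : H), (S j h : M) = lp.single 2 j h := fun _ _ => rfl
  have hSmod : ∀ (j : ι) (a : A) (h : H), S j (πH a h) = multipleRep A πH ι a (S j h) := by
    intro j a h
    ext i
    rw [hS, hS]
    show (lp.single 2 j (πH a h) : M) i = lpDiag ι (πH a) (lp.single 2 j h) i
    rw [lpDiag_apply]
    by_cases hij : i = j
    · subst hij; simp [lp.single_apply_self]
    · simp [lp.single_apply_ne 2 j _ hij, Pi.single_apply, hij]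
  by_cases hex : ∃ j : ι, R.comp (Q.comp (S j)) ≠ 0
  · obtain ⟨j, hj⟩ := hex
    refine ⟨Q.comp (S j), ?_, hj⟩
    intro a h
    simp only [ContinuousLinearMap.comp_apply]
    rw [hSmod j a h, hQmod]
  · push_neg at hex
    exfalso
    apply hRne
    have hRQ : ∀ m : M, R (Q m) = 0 := by
      intro m
      have hsum : HasSum (fun i : ι => lp.single 2 i (m i)) m :=
        lp.hasSum_single (by norm_num) m
      have hsum2 : HasSum (fun i : ι => R (Q (lp.single 2 i (m i)))) (R (Q m)) :=
        ((R.comp Q).hasSum hsum)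
      have hzero : (fun i : ι => R (Q (lp.single 2 i (m i)))) = fun _ => (0 : L) := by
        funext i
        have := congrFun (congrArg (fun (T : H →L[ℂ] L) => ⇑T) (hex i)) (m i)
        simpa [hS] using this
      rw [hzero] at hsum2
      exact (hasSum_zero.unique hsum2).symm
    ext x
    have hfix : P (U x) = U x := by
      obtain ⟨m, hm⟩ : (U x : M) ∈ Set.range ⇑P := hrange.symm ▸ Set.mem_range_self x
      rw [← hm, ← ContinuousLinearMap.comp_apply, hPP]
    have hQU : Q (U x) = x := hUinj (by rw [hQ, hfix])
    have := hRQ (U x)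
    rw [hQU] at this
    simpa using this
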